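/- arXiv:0904.1652 — 3 statements merged into one kernel-verified Lean document; each statement's English description precedes it below -/
import Mathlib

section
/- If p(n) = w(n)/n with w(n) → 0 as n → ∞, then the probability that the Erdős–Rényi random graph G(n, p(n)) is a forest (contains no cycle) tends to 1 as n → ∞. -/
open scoped Classical

open Filter

lemma sum_powerset_pow {α : Type*} [DecidableEq α] (s : Finset α) (x y : ℝ) :
    ∑ t ∈ s.powerset, x ^ t.card * y ^ (s.card - t.card) = (x + y) ^ s.card := by
  have h := Finset.prod_add (fun _ : α => x) (fun _ => y) s
  rw [Finset.prod_const] at h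
  rw [h]
  refine Finset.sum_congr rfl fun t ht => ?_
  rw [Finset.prod_const, Finset.prod_const, Finset.card_sdiff_of_subset (Finset.mem_powerset.mp ht)]

lemma sum_powerset_superset {α : Type*} [DecidableEq α] (U C : Finset α) (hC : C ⊆ U) (x : ℝ) :
    ∑ E ∈ U.powerset.filter (fun E => C ⊆ E),
      x ^ E.card * (1 - x) ^ (U.card - E.card) = x ^ C.card := by
  have h1 : x ^ C.card
      = ∑ F ∈ (U \ C).powerset, x ^ (F.card + C.card) * (1 - x) ^ ((U \ C).card - F.card) := by
    have := sum_powerset_pow (U \ C) x (1 - x)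
    simp only [add_sub_cancel, one_pow] at this
    calc x ^ C.card = x ^ C.card * 1 := (mul_one _).symm
      _ = x ^ C.card * ∑ F ∈ (U \ C).powerset, x ^ F.card * (1 - x) ^ ((U \ C).card - F.card) := by
          rw [this]
      _ = _ := by rw [Finset.mul_sum]; exact Finset.sum_congr rfl fun F _ => by ring
  rw [h1]
  refine Finset.sum_nbij' (i := fun E => E \ C) (j := fun F => F ∪ C) ?_ ?_ ?_ ?_ ?_
  · intro E hE
    simp only [Finset.mem_filter, Finset.mem_powerset] at hE ⊢
    exact Finset.sdiff_subset_sdiff hE.1 Finset.Subset.rfl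
  · intro F hF
    simp only [Finset.mem_filter, Finset.mem_powerset] at hF ⊢
    exact ⟨Finset.union_subset (hF.trans Finset.sdiff_subset) hC, Finset.subset_union_right⟩
  · intro E hE
    simp only [Finset.mem_filter, Finset.mem_powerset] at hE
    exact Finset.sdiff_union_of_subset hE.2
  · intro F hF
    simp only [Finset.mem_powerset] at hF
    have hd : Disjoint F C := Finset.disjoint_of_subset_left hF Finset.sdiff_disjoint
    show (F ∪ C) \ C = F
    rw [Finset.union_sdiff_right, Finset.sdiff_eq_self_of_disjoint hd]
  · intro E hE
    simp only [Finset.mem_filter, Finset.mem_powerset] at hE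
    have h2 : (E \ C).card + C.card = E.card := Finset.card_sdiff_add_card_eq_card hE.2
    have h3 : (U \ C).card = U.card - C.card := Finset.card_sdiff_of_subset hC
    have h4 : C.card ≤ E.card := Finset.card_le_card hE.2
    have h5 : E.card ≤ U.card := Finset.card_le_card hE.1
    have h6 : (U \ C).card - (E \ C).card = U.card - E.card := by omega
    rw [h2, h6]

lemma walk_edges_eq {V : Type*} {G : SimpleGraph V} {u v : V} (p : G.Walk u v) :
    p.edges = (List.range p.length).map (fun i => s(p.getVert i, p.getVert (i + 1))) := by
  induction p with
  | nil => simp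
  | cons h q ih =>
    rw [SimpleGraph.Walk.edges_cons, SimpleGraph.Walk.length_cons, List.range_succ_eq_map,
      List.map_cons, List.map_map, ih]
    congr 1
    simp [SimpleGraph.Walk.getVert_cons_succ, SimpleGraph.Walk.getVert_zero]

lemma walk_edges_get {V : Type*} {G : SimpleGraph V} {u v : V} (p : G.Walk u v)
    (i : ℕ) (hi : i < p.edges.length) :
    p.edges.get ⟨i, hi⟩ = s(p.getVert i, p.getVert (i + 1)) := by
  rw [List.get_of_eq (walk_edges_eq p) ⟨i, hi⟩, List.get_eq_getElem,
    List.getElem_map, List.getElem_range]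

/-- The edge set of a cyclic vertex sequence. -/
noncomputable def cycEdges {n k : ℕ} (L : Fin k → Fin n) : Finset (Sym2 (Fin n)) :=
  Finset.image (fun i : Fin k => s(L i, L ⟨((i : ℕ) + 1) % k, Nat.mod_lt _ i.pos⟩)) Finset.univ

lemma exists_cycle_data {n : ℕ} (E : Finset (Sym2 (Fin n)))
    (hbad : ¬ (SimpleGraph.fromEdgeSet (E : Set (Sym2 (Fin n)))).IsAcyclic) :
    ∃ (k : ℕ) (L : Fin k → Fin n), 3 ≤ k ∧ (cycEdges L).card = k ∧ cycEdges L ⊆ E := by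
  rw [SimpleGraph.IsAcyclic] at hbad
  push_neg at hbad
  obtain ⟨v, c, hc⟩ := hbad
  have hlen : c.edges.length = c.length := c.length_edges
  -- the key pointwise identity
  have key : ∀ i : Fin c.length,
      s(c.getVert i, c.getVert ((((i : ℕ) + 1) % c.length)))
        = c.edges.get ⟨i, by rw [hlen]; exact i.2⟩ := by
    intro i
    rw [walk_edges_get]
    by_cases hi : (i : ℕ) + 1 < c.length
    · rw [Nat.mod_eq_of_lt hi]
    · have h1 : (i : ℕ) + 1 = c.length := by omega
      rw [h1, Nat.mod_self, SimpleGraph.Walk.getVert_zero, SimpleGraph.Walk.getVert_length]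
  have hfun : (fun i : Fin c.length =>
      s(c.getVert i, c.getVert (⟨((i : ℕ) + 1) % c.length, Nat.mod_lt _ i.pos⟩ : Fin c.length)))
      = fun i : Fin c.length => c.edges.get ⟨i, by rw [hlen]; exact i.2⟩ := by
    funext i
    exact key i
  have himg : cycEdges (fun i : Fin c.length => c.getVert i)
      = Finset.image (fun i : Fin c.length => c.edges.get ⟨i, by rw [hlen]; exact i.2⟩)
        Finset.univ := by
    rw [cycEdges, hfun]
  refine ⟨c.length, fun i => c.getVert i, hc.three_le_length, ?_, ?_⟩
  · rw [himg, Finset.card_image_of_injective _ ?_, Finset.card_univ, Fintype.card_fin]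
    intro a b hab
    have hinj := List.nodup_iff_injective_get.mp hc.edges_nodup hab
    exact Fin.ext (by simpa using hinj)
  · rw [himg]
    intro e he
    simp only [Finset.mem_image, Finset.mem_univ, true_and] at he
    obtain ⟨i, rfl⟩ := he
    have hmem : c.edges.get ⟨i, by rw [hlen]; exact i.2⟩ ∈ c.edges := List.get_mem _ _
    have := c.edges_subset_edgeSet hmem
    rw [SimpleGraph.edgeSet_fromEdgeSet] at this
    exact this.1

lemma bad_sum_le {n : ℕ} (U : Finset (Sym2 (Fin n))) (x : ℝ) (hx0 : 0 ≤ x) (hx1 : x ≤ 1) :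
    ∑ E ∈ U.powerset.filter
        (fun E : Finset (Sym2 (Fin n)) => ¬ (SimpleGraph.fromEdgeSet (E : Set (Sym2 (Fin n)))).IsAcyclic),
      x ^ E.card * (1 - x) ^ (U.card - E.card)
    ≤ ∑ k ∈ Finset.Icc 3 U.card, (n : ℝ) ^ k * x ^ k := by
  set g : Finset (Sym2 (Fin n)) → ℝ := fun E => x ^ E.card * (1 - x) ^ (U.card - E.card) with hgdef
  have hg : ∀ E, 0 ≤ g E := fun E =>
    mul_nonneg (pow_nonneg hx0 _) (pow_nonneg (by linarith) _)
  set I : (k : ℕ) → Finset (Fin k → Fin n) := fun k =>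
    (Finset.univ : Finset (Fin k → Fin n)).filter
      (fun L => (cycEdges L).card = k ∧ cycEdges L ⊆ U) with hIdef
  have hite : ∀ (k : ℕ) (L : Fin k → Fin n) (E : Finset (Sym2 (Fin n))),
      0 ≤ if cycEdges L ⊆ E then g E else 0 := by
    intro k L E
    split_ifs
    · exact hg E
    · exact le_rfl
  calc ∑ E ∈ U.powerset.filter
        (fun E : Finset (Sym2 (Fin n)) => ¬ (SimpleGraph.fromEdgeSet (E : Set (Sym2 (Fin n)))).IsAcyclic), g E
      ≤ ∑ E ∈ U.powerset.filter
        (fun E : Finset (Sym2 (Fin n)) => ¬ (SimpleGraph.fromEdgeSet (E : Set (Sym2 (Fin n)))).IsAcyclic),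
          ∑ k ∈ Finset.Icc 3 U.card, ∑ L ∈ I k, (if cycEdges L ⊆ E then g E else 0) := by
        refine Finset.sum_le_sum fun E hE => ?_
        simp only [Finset.mem_filter, Finset.mem_powerset] at hE
        obtain ⟨k, L, hk3, hcard, hsub⟩ := exists_cycle_data E hE.2
        have hsubU : cycEdges L ⊆ U := hsub.trans hE.1
        have hkM : k ≤ U.card := hcard ▸ Finset.card_le_card hsubU
        have hkmem : k ∈ Finset.Icc 3 U.card := Finset.mem_Icc.mpr ⟨hk3, hkM⟩
        have hLmem : L ∈ I k := Finset.mem_filter.mpr ⟨Finset.mem_univ _, hcard, hsubU⟩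
        have step1 : g E ≤ ∑ L' ∈ I k, (if cycEdges L' ⊆ E then g E else 0) := by
          have h := Finset.single_le_sum
            (f := fun L' => if cycEdges L' ⊆ E then g E else 0)
            (fun L' _ => hite k L' E) hLmem
          simpa only [if_pos hsub] using h
        refine step1.trans ?_
        exact Finset.single_le_sum
          (f := fun k' => ∑ L ∈ I k', (if cycEdges L ⊆ E then g E else 0))
          (fun k' _ => Finset.sum_nonneg fun L' _ => hite k' L' E) hkmem
    _ ≤ ∑ E ∈ U.powerset,
          ∑ k ∈ Finset.Icc 3 U.card, ∑ L ∈ I k, (if cycEdges L ⊆ E then g E else 0) :=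
        Finset.sum_le_sum_of_subset_of_nonneg (Finset.filter_subset _ _)
          (fun E _ _ => Finset.sum_nonneg fun k _ =>
            Finset.sum_nonneg fun L _ => hite k L E)
    _ = ∑ k ∈ Finset.Icc 3 U.card, ∑ L ∈ I k,
          ∑ E ∈ U.powerset, (if cycEdges L ⊆ E then g E else 0) := by
        rw [Finset.sum_comm]
        exact Finset.sum_congr rfl fun k _ => Finset.sum_comm
    _ = ∑ k ∈ Finset.Icc 3 U.card, ∑ L ∈ I k, x ^ k := by
        refine Finset.sum_congr rfl fun k _ => Finset.sum_congr rfl fun L hL => ?_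
        simp only [hIdef, Finset.mem_filter, Finset.mem_univ, true_and] at hL
        rw [← Finset.sum_filter]
        have h := sum_powerset_superset U (cycEdges L) hL.2 x
        rw [hL.1] at h
        exact h
    _ ≤ ∑ k ∈ Finset.Icc 3 U.card, (n : ℝ) ^ k * x ^ k := by
        refine Finset.sum_le_sum fun k _ => ?_
        calc ∑ L ∈ I k, x ^ k
            ≤ ∑ _L ∈ (Finset.univ : Finset (Fin k → Fin n)), x ^ k :=
              Finset.sum_le_sum_of_subset_of_nonneg (Finset.filter_subset _ _)
                (fun _ _ _ => pow_nonneg hx0 _)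
          _ = (n : ℝ) ^ k * x ^ k := by
              rw [Finset.sum_const, Finset.card_univ, nsmul_eq_mul]
              congr 1
              rw [Fintype.card_fun]
              push_cast
              simp

lemma tail_geom_le (a : ℝ) (M : ℕ) (h0 : 0 ≤ a) (h2 : a ≤ 1/2) :
    ∑ k ∈ Finset.Icc 3 M, a ^ k ≤ 16 * a ^ 3 := by
  have step : ∀ k ∈ Finset.Icc 3 M, a ^ k ≤ 8 * a ^ 3 * (1/2 : ℝ) ^ k := by
    intro k hk
    obtain ⟨h3, _⟩ := Finset.mem_Icc.mp hk
    have he : a ^ k = a ^ 3 * a ^ (k - 3) := by rw [← pow_add]; congr 1; omega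
    rw [he]
    have h4 : a ^ (k - 3) ≤ (1/2 : ℝ) ^ (k - 3) := pow_le_pow_left₀ h0 h2 _
    have h5 : (1/2 : ℝ) ^ (k - 3) = 8 * (1/2 : ℝ) ^ k := by
      have hh : (1/2 : ℝ) ^ k = (1/2) ^ (k - 3) * (1/2) ^ 3 := by
        rw [← pow_add]; congr 1; omega
      rw [hh]; ring
    calc a ^ 3 * a ^ (k - 3) ≤ a ^ 3 * (1/2 : ℝ) ^ (k - 3) :=
          mul_le_mul_of_nonneg_left h4 (pow_nonneg h0 _)
      _ = 8 * a ^ 3 * (1/2 : ℝ) ^ k := by rw [h5]; ring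
  calc ∑ k ∈ Finset.Icc 3 M, a ^ k ≤ ∑ k ∈ Finset.Icc 3 M, 8 * a ^ 3 * (1/2 : ℝ) ^ k :=
        Finset.sum_le_sum step
    _ = 8 * a ^ 3 * ∑ k ∈ Finset.Icc 3 M, (1/2 : ℝ) ^ k := by rw [Finset.mul_sum]
    _ ≤ 8 * a ^ 3 * 2 := by
        refine mul_le_mul_of_nonneg_left ?_ (by positivity)
        calc ∑ k ∈ Finset.Icc 3 M, (1/2 : ℝ) ^ k
            ≤ ∑ k ∈ Finset.range (M + 1), (1/2 : ℝ) ^ k := by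
              refine Finset.sum_le_sum_of_subset_of_nonneg ?_ (fun _ _ _ => by positivity)
              intro k hk
              simp only [Finset.mem_Icc] at hk
              simp only [Finset.mem_range]
              omega
          _ ≤ 2 := by
              rw [geom_sum_eq (by norm_num : (1/2 : ℝ) ≠ 1),
                div_le_iff_of_neg (by norm_num : (1/2 : ℝ) - 1 < 0)]
              have : (0:ℝ) ≤ (1/2 : ℝ) ^ (M + 1) := by positivity
              linarith
    _ = 16 * a ^ 3 := by ring

/-- The probability that `G(n, p n)` is *not* a forest. -/
noncomputable def badSum (p : ℕ → ℝ) (n : ℕ) : ℝ :=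
  ∑ E ∈ ((Finset.univ : Finset (Sym2 (Fin n))).filter fun a => ¬ a.IsDiag).powerset.filter
      (fun E : Finset (Sym2 (Fin n)) =>
        ¬ (SimpleGraph.fromEdgeSet (E : Set (Sym2 (Fin n)))).IsAcyclic),
    p n ^ E.card * (1 - p n) ^
      ((((Finset.univ : Finset (Sym2 (Fin n))).filter fun a => ¬ a.IsDiag)).card - E.card)

/-- If `p(n) = w(n)/n` with `w(n) ≥ 0` and `w(n) → 0`, then the probability that the
Erdős–Rényi random graph `G(n, p(n))` is a forest (contains no cycle) tends to `1`. -/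
theorem prob_forest_tendsto_one (w p : ℕ → ℝ) (hw0 : ∀ n, 0 ≤ w n)
    (hp : ∀ n, p n = w n / n) (hw : Tendsto w atTop (nhds 0)) :
    Tendsto (fun n =>
      ∑ E ∈ ((Finset.univ : Finset (Sym2 (Fin n))).filter fun a => ¬ a.IsDiag).powerset,
        if (SimpleGraph.fromEdgeSet (E : Set (Sym2 (Fin n)))).IsAcyclic then
          p n ^ E.card *
            (1 - p n) ^
              (((Finset.univ : Finset (Sym2 (Fin n))).filter fun a => ¬ a.IsDiag).card
                - E.card)
        else 0) atTop (nhds 1) := by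
  have key : ∀ n : ℕ,
      (∑ E ∈ ((Finset.univ : Finset (Sym2 (Fin n))).filter fun a => ¬ a.IsDiag).powerset,
        if (SimpleGraph.fromEdgeSet (E : Set (Sym2 (Fin n)))).IsAcyclic then
          p n ^ E.card *
            (1 - p n) ^
              (((Finset.univ : Finset (Sym2 (Fin n))).filter fun a => ¬ a.IsDiag).card
                - E.card)
        else 0) = 1 - badSum p n := by
    intro n
    set Un := ((Finset.univ : Finset (Sym2 (Fin n))).filter fun a => ¬ a.IsDiag) with hUn
    set g : Finset (Sym2 (Fin n)) → ℝ :=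
      fun E => p n ^ E.card * (1 - p n) ^ (Un.card - E.card) with hgdef
    have htot : ∑ E ∈ Un.powerset, g E = 1 := by
      have h := sum_powerset_pow Un (p n) (1 - p n)
      simpa using h
    have hsplit := Finset.sum_filter_add_sum_filter_not Un.powerset
      (fun E : Finset (Sym2 (Fin n)) =>
        (SimpleGraph.fromEdgeSet (E : Set (Sym2 (Fin n)))).IsAcyclic) g
    have hif : (∑ E ∈ Un.powerset,
        if (SimpleGraph.fromEdgeSet (E : Set (Sym2 (Fin n)))).IsAcyclic then g E else 0)
        = ∑ E ∈ Un.powerset.filter (fun E : Finset (Sym2 (Fin n)) =>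
            (SimpleGraph.fromEdgeSet (E : Set (Sym2 (Fin n)))).IsAcyclic), g E :=
      (Finset.sum_filter _ _).symm
    have hbadeq : badSum p n = ∑ E ∈ Un.powerset.filter (fun E : Finset (Sym2 (Fin n)) =>
        ¬ (SimpleGraph.fromEdgeSet (E : Set (Sym2 (Fin n)))).IsAcyclic), g E := rfl
    rw [hif, hbadeq]
    linarith [hsplit, htot]
  have hev : ∀ᶠ n : ℕ in atTop, 0 ≤ badSum p n ∧ badSum p n ≤ 16 * w n ^ 3 := by
    have h12 : ∀ᶠ n in atTop, w n < 1/2 := hw.eventually_lt_const (by norm_num)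
    filter_upwards [h12, eventually_ge_atTop 1] with n hw2 hn1
    have hn0 : (0:ℝ) < (n : ℝ) := by exact_mod_cast hn1
    have hp0 : 0 ≤ p n := by rw [hp n]; exact div_nonneg (hw0 n) hn0.le
    have hp1 : p n ≤ 1 := by
      rw [hp n, div_le_one hn0]
      calc w n ≤ 1/2 := hw2.le
        _ ≤ 1 := by norm_num
        _ ≤ (n:ℝ) := by exact_mod_cast hn1
    constructor
    · exact Finset.sum_nonneg fun E _ =>
        mul_nonneg (pow_nonneg hp0 _) (pow_nonneg (by linarith) _)
    · calc badSum p n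
          ≤ ∑ k ∈ Finset.Icc 3
              (((Finset.univ : Finset (Sym2 (Fin n))).filter fun a => ¬ a.IsDiag)).card,
              (n : ℝ) ^ k * p n ^ k :=
            bad_sum_le _ (p n) hp0 hp1
        _ = ∑ k ∈ Finset.Icc 3
              (((Finset.univ : Finset (Sym2 (Fin n))).filter fun a => ¬ a.IsDiag)).card,
              w n ^ k := by
            refine Finset.sum_congr rfl fun k _ => ?_
            rw [← mul_pow, hp n, mul_div_cancel₀ _ hn0.ne']
        _ ≤ 16 * w n ^ 3 := tail_geom_le (w n) _ (hw0 n) hw2.le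
  have hBad : Tendsto (fun n => badSum p n) atTop (nhds 0) :=
    squeeze_zero' (hev.mono fun n h => h.1) (hev.mono fun n h => h.2)
      (by simpa using (hw.pow 3).const_mul (16:ℝ))
  have hfin : Tendsto (fun n => 1 - badSum p n) atTop (nhds (1 - 0)) :=
    tendsto_const_nhds.sub hBad
  simp only [sub_zero] at hfin
  exact hfin.congr fun n => (key n).symm
end

section
/- Let d ≥ 1 and suppose p(n) = w(n)/n with w(n) → ∞. Then with X^n the number of (d+2)-subsets of [n] all of whose d-faces belong to Δ ∈ Y_{n,p(n),d}, we have E(X^n) → ∞ and ξ*/E(X^n) → 0, where ξ* = (d+2)(n−d−1)p^{d+1}. Consequently Prob(X^n > 0) → 1. -/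
open scoped Classical

open Filter

section aux
open Finset

lemma binom_sum' {α : Type*} (p q : ℝ) (F : Finset α) :
    ∑ S ∈ F.powerset, p ^ S.card * q ^ (F.card - S.card) = (p + q) ^ F.card := by
  classical
  rw [← Finset.prod_const, Finset.prod_add]
  apply Finset.sum_congr rfl
  intro t ht
  rw [Finset.prod_const, Finset.prod_const, Finset.card_sdiff_of_subset (Finset.mem_powerset.mp ht)]

lemma mu_one' {α : Type*} (p : ℝ) (F : Finset α) :
    ∑ S ∈ F.powerset, p ^ S.card * (1 - p) ^ (F.card - S.card) = 1 := by
  rw [binom_sum', show p + (1 - p) = 1 by ring, one_pow]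

lemma sum_supersets' {α : Type*} (p : ℝ) (F A : Finset α) (hA : A ⊆ F) :
    ∑ S ∈ F.powerset.filter (fun S => A ⊆ S), p ^ S.card * (1 - p) ^ (F.card - S.card)
      = p ^ A.card := by
  classical
  have key : ∑ S ∈ F.powerset.filter (fun S => A ⊆ S),
      p ^ S.card * (1 - p) ^ (F.card - S.card)
      = ∑ B ∈ (F \ A).powerset, p ^ A.card * (p ^ B.card * (1 - p) ^ ((F \ A).card - B.card)) := by
    apply Finset.sum_nbij' (fun S => S \ A) (fun B => A ∪ B)
    · intro S hS
      simp only [Finset.mem_filter, Finset.mem_powerset] at hS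
      exact Finset.mem_powerset.mpr (Finset.sdiff_subset_sdiff hS.1 le_rfl)
    · intro B hB
      simp only [Finset.mem_powerset] at hB
      refine Finset.mem_filter.mpr ⟨Finset.mem_powerset.mpr ?_, Finset.subset_union_left⟩
      exact Finset.union_subset hA (hB.trans Finset.sdiff_subset)
    · intro S hS
      simp only [Finset.mem_filter, Finset.mem_powerset] at hS
      exact Finset.union_sdiff_of_subset hS.2
    · intro B hB
      simp only [Finset.mem_powerset] at hB
      exact Finset.union_sdiff_cancel_left (Finset.disjoint_sdiff.mono_right hB)
    · intro S hS
      simp only [Finset.mem_filter, Finset.mem_powerset] at hS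
      have h1 : (S \ A).card = S.card - A.card := Finset.card_sdiff_of_subset hS.2
      have h2 : (F \ A).card = F.card - A.card := Finset.card_sdiff_of_subset hA
      have hAS := Finset.card_le_card hS.2
      have hSF := Finset.card_le_card hS.1
      rw [← mul_assoc, ← pow_add, h1, h2]
      congr 2
      · omega
      · omega
  rw [key, ← Finset.mul_sum, binom_sum']
  simp

lemma interchange' {α : Type*} [DecidableEq α] {ι : Type*} (p : ℝ) (F : Finset α) (𝒯 : Finset ι)
    (A : ι → Finset α) (hA : ∀ T ∈ 𝒯, A T ⊆ F) :
    ∑ S ∈ F.powerset, p ^ S.card * (1 - p) ^ (F.card - S.card)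
        * (∑ T ∈ 𝒯, if A T ⊆ S then (1:ℝ) else 0)
      = ∑ T ∈ 𝒯, p ^ (A T).card := by
  classical
  simp_rw [Finset.mul_sum]
  rw [Finset.sum_comm]
  apply Finset.sum_congr rfl
  intro T hT
  rw [← sum_supersets' p F (A T) (hA T hT), Finset.sum_filter]
  apply Finset.sum_congr rfl
  intro S hS
  by_cases h : A T ⊆ S <;> simp [h]

lemma faces_subset' {n d : ℕ} (T : Finset (Fin n)) :
    T.powersetCard (d+1) ⊆ Finset.univ.powerset.filter fun s => s.card = d + 1 := by
  intro f hf
  simp only [Finset.mem_powersetCard] at hf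
  simp [hf.2]

lemma faces_card' {n d : ℕ} {T : Finset (Fin n)} (hT : T.card = d + 2) :
    (T.powersetCard (d+1)).card = d + 2 := by
  rw [Finset.card_powersetCard, hT, Nat.choose_succ_self_right]

lemma N_eq' {n d : ℕ} (S : Finset (Finset (Fin n))) :
    (Finset.univ.powerset.filter fun T => T.card = d + 2 ∧ ∀ f ∈ T.powerset, f.card = d + 1 → f ∈ S)
      = (Finset.univ.powersetCard (d+2)).filter fun T => T.powersetCard (d+1) ⊆ S := by
  ext T
  simp only [Finset.mem_filter, Finset.mem_powerset, Finset.mem_powersetCard,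
    Finset.subset_univ, true_and]
  constructor
  · rintro ⟨hc, h⟩
    exact ⟨hc, fun f hf => by
      rw [Finset.mem_powersetCard] at hf
      exact h f hf.1 hf.2⟩
  · rintro ⟨hc, h⟩
    exact ⟨hc, fun f hf hfc => h (Finset.mem_powersetCard.mpr ⟨hf, hfc⟩)⟩

lemma Ncast' {n d : ℕ} (S : Finset (Finset (Fin n))) :
    (((Finset.univ.powerset.filter fun T : Finset (Fin n) =>
        T.card = d + 2 ∧ ∀ f ∈ T.powerset, f.card = d + 1 → f ∈ S).card : ℝ))
      = ∑ T ∈ Finset.univ.powersetCard (d+2),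
          if T.powersetCard (d+1) ⊆ S then (1:ℝ) else 0 := by
  rw [N_eq', Finset.card_filter]
  push_cast
  rfl

lemma exp_eq' {n d : ℕ} (p : ℝ) :
    ∑ S ∈ ((Finset.univ : Finset (Fin n)).powerset.filter fun s => s.card = d + 1).powerset,
      p ^ S.card * (1 - p) ^ (((Finset.univ : Finset (Fin n)).powerset.filter
          fun s => s.card = d + 1).card - S.card)
        * (((Finset.univ : Finset (Fin n)).powerset.filter fun T =>
            T.card = d + 2 ∧ ∀ f ∈ T.powerset, f.card = d + 1 → f ∈ S).card : ℝ)
      = (n.choose (d+2) : ℝ) * p ^ (d+2) := by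
  have h := interchange' p ((Finset.univ : Finset (Fin n)).powerset.filter fun s => s.card = d + 1)
      (Finset.univ.powersetCard (d+2)) (fun T => T.powersetCard (d+1))
      (fun T _ => faces_subset' T)
  simp_rw [Ncast']
  beta_reduce at h
  have h2 : ∑ T ∈ (Finset.univ : Finset (Fin n)).powersetCard (d+2),
      p ^ (T.powersetCard (d+1)).card = (n.choose (d+2) : ℝ) * p ^ (d+2) := by
    rw [Finset.sum_congr rfl (fun T hT => by
      rw [faces_card' (Finset.mem_powersetCard.mp hT).2])]
    rw [Finset.sum_const, Finset.card_powersetCard, Finset.card_univ, Fintype.card_fin,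
      nsmul_eq_mul]
  exact h.trans h2

lemma m2_eq' {n d : ℕ} (p : ℝ) :
    ∑ S ∈ ((Finset.univ : Finset (Fin n)).powerset.filter fun s => s.card = d + 1).powerset,
      p ^ S.card * (1 - p) ^ (((Finset.univ : Finset (Fin n)).powerset.filter
          fun s => s.card = d + 1).card - S.card)
        * ((((Finset.univ : Finset (Fin n)).powerset.filter fun T =>
            T.card = d + 2 ∧ ∀ f ∈ T.powerset, f.card = d + 1 → f ∈ S).card : ℝ))^2
      = ∑ P ∈ (Finset.univ.powersetCard (d+2)) ×ˢ ((Finset.univ : Finset (Fin n)).powersetCard (d+2)),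
          p ^ (P.1.powersetCard (d+1) ∪ P.2.powersetCard (d+1)).card := by
  have h := interchange' p ((Finset.univ : Finset (Fin n)).powerset.filter fun s => s.card = d + 1)
      ((Finset.univ.powersetCard (d+2)) ×ˢ ((Finset.univ : Finset (Fin n)).powersetCard (d+2)))
      (fun P => P.1.powersetCard (d+1) ∪ P.2.powersetCard (d+1))
      (fun P _ => Finset.union_subset (faces_subset' P.1) (faces_subset' P.2))
  beta_reduce at h
  refine Eq.trans ?_ h
  apply Finset.sum_congr rfl
  intro S hS
  congr 1
  rw [Ncast', sq, Finset.sum_mul_sum, ← Finset.sum_product']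
  apply Finset.sum_congr rfl
  intro P hP
  by_cases h1 : P.1.powersetCard (d+1) ⊆ S <;>
    by_cases h2 : P.2.powersetCard (d+1) ⊆ S <;>
    simp [h1, h2, Finset.union_subset_iff]

lemma inter_card_le' {n d : ℕ} {T T' : Finset (Fin n)} (hT : T.card = d+2)
    (hT' : T'.card = d+2) (hne : T ≠ T') : (T ∩ T').card ≤ d + 1 := by
  by_contra h
  push_neg at h
  have h2 : (T ∩ T').card ≤ T.card := Finset.card_le_card Finset.inter_subset_left
  have hTe : T ∩ T' = T := Finset.eq_of_subset_of_card_le Finset.inter_subset_left (by omega)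
  have hTe' : T ∩ T' = T' := Finset.eq_of_subset_of_card_le Finset.inter_subset_right (by omega)
  exact hne (hTe ▸ hTe')

lemma union_faces_small' {n d : ℕ} {T T' : Finset (Fin n)} (hT : T.card = d+2)
    (hT' : T'.card = d+2) (h : (T ∩ T').card ≤ d) :
    (T.powersetCard (d+1) ∪ T'.powersetCard (d+1)).card = 2*d+4 := by
  rw [Finset.card_union_of_disjoint, faces_card' hT, faces_card' hT']
  · omega
  · rw [Finset.disjoint_left]
    intro f hf hf'
    rw [Finset.mem_powersetCard] at hf hf'
    have : f ⊆ T ∩ T' := Finset.subset_inter hf.1 hf'.1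
    have := Finset.card_le_card this
    omega

lemma union_faces_med' {n d : ℕ} {T T' : Finset (Fin n)} (hT : T.card = d+2)
    (hT' : T'.card = d+2) (h : (T ∩ T').card = d+1) :
    2*d+3 ≤ (T.powersetCard (d+1) ∪ T'.powersetCard (d+1)).card := by
  have key := Finset.card_union_add_card_inter (T.powersetCard (d+1)) (T'.powersetCard (d+1))
  have hsub : T.powersetCard (d+1) ∩ T'.powersetCard (d+1) ⊆ {T ∩ T'} := by
    intro f hf
    rw [Finset.mem_inter, Finset.mem_powersetCard, Finset.mem_powersetCard] at hf
    have h1 : f ⊆ T ∩ T' := Finset.subset_inter hf.1.1 hf.2.1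
    rw [Finset.mem_singleton]
    exact Finset.eq_of_subset_of_card_le h1 (by omega)
  have := Finset.card_le_card hsub
  rw [Finset.card_singleton] at this
  rw [faces_card' hT, faces_card' hT'] at key
  omega

lemma class2_count' {n d : ℕ} :
    (((Finset.univ.powersetCard (d+2)) ×ˢ ((Finset.univ : Finset (Fin n)).powersetCard (d+2))).filter
        fun P => ¬P.1 = P.2 ∧ (P.1 ∩ P.2).card = d+1).card
      ≤ n.choose (d+2) * ((d+2) * n) := by
  have h := Finset.card_le_card_of_injOn
    (f := fun P : Finset (Fin n) × Finset (Fin n) =>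
      (⟨P.1, (P.1 ∩ P.2, P.2 \ P.1)⟩ : Σ _ : Finset (Fin n), Finset (Fin n) × Finset (Fin n)))
    (s := ((Finset.univ.powersetCard (d+2)) ×ˢ ((Finset.univ : Finset (Fin n)).powersetCard (d+2))).filter
        fun P => ¬P.1 = P.2 ∧ (P.1 ∩ P.2).card = d+1)
    (t := (Finset.univ.powersetCard (d+2)).sigma
      (fun T => T.powersetCard (d+1) ×ˢ (Finset.univ : Finset (Fin n)).powersetCard 1))
    ?_ ?_
  · refine h.trans (le_of_eq ?_)
    rw [Finset.card_sigma]
    rw [Finset.sum_congr rfl (fun T hT => by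
      rw [Finset.card_product, faces_card' (Finset.mem_powersetCard.mp hT).2,
        Finset.card_powersetCard, Finset.card_univ, Fintype.card_fin, Nat.choose_one_right])]
    rw [Finset.sum_const, Finset.card_powersetCard, Finset.card_univ, Fintype.card_fin,
      smul_eq_mul]
  · intro P hP
    simp only [Finset.mem_coe, Finset.mem_filter, Finset.mem_product, Finset.mem_powersetCard] at hP
    obtain ⟨⟨⟨h1u, h1c⟩, h2u, h2c⟩, hne, hic⟩ := hP
    rw [Finset.mem_coe, Finset.mem_sigma]
    constructor
    · exact Finset.mem_powersetCard.mpr ⟨h1u, h1c⟩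
    · rw [Finset.mem_product, Finset.mem_powersetCard, Finset.mem_powersetCard]
      refine ⟨⟨Finset.inter_subset_left, hic⟩, Finset.subset_univ _, ?_⟩
      have hkey := Finset.card_sdiff_add_card_inter P.2 P.1
      rw [Finset.inter_comm P.2 P.1] at hkey
      show (P.2 \ P.1).card = 1
      omega
  · intro P hP P' hP' heq
    rw [Sigma.mk.inj_iff] at heq
    obtain ⟨e1, heq2⟩ := heq
    rw [heq_iff_eq, Prod.mk.injEq] at heq2
    obtain ⟨e2, e3⟩ := heq2
    have r : P.2 = (P.2 \ P.1) ∪ (P.1 ∩ P.2) := by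
      rw [Finset.inter_comm, Finset.sdiff_union_inter]
    have r' : P'.2 = (P'.2 \ P'.1) ∪ (P'.1 ∩ P'.2) := by
      rw [Finset.inter_comm, Finset.sdiff_union_inter]
    exact Prod.ext e1 (by rw [r, r', e2, e3])

lemma m2_bound' {n d : ℕ} {p : ℝ} (hp0 : 0 ≤ p) (hp1 : p ≤ 1) :
    ∑ P ∈ (Finset.univ.powersetCard (d+2)) ×ˢ ((Finset.univ : Finset (Fin n)).powersetCard (d+2)),
        p ^ (P.1.powersetCard (d+1) ∪ P.2.powersetCard (d+1)).card
      ≤ ((n.choose (d+2):ℝ) * p^(d+2))^2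
        + (n.choose (d+2):ℝ) * p^(d+2) * (1 + ((d:ℝ)+2) * n * p^(d+1)) := by
  classical
  set 𝒯 := (Finset.univ : Finset (Fin n)).powersetCard (d+2) with h𝒯
  set Q := 𝒯 ×ˢ 𝒯 with hQ
  set f : Finset (Fin n) × Finset (Fin n) → ℝ :=
    fun P => p ^ (P.1.powersetCard (d+1) ∪ P.2.powersetCard (d+1)).card with hf
  have hmem : ∀ P ∈ Q, P.1.card = d + 2 ∧ P.2.card = d + 2 := by
    intro P hP
    rw [hQ, Finset.mem_product, h𝒯, Finset.mem_powersetCard, Finset.mem_powersetCard] at hP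
    exact ⟨hP.1.2, hP.2.2⟩
  have hcard𝒯 : 𝒯.card = n.choose (d+2) := by
    rw [h𝒯, Finset.card_powersetCard, Finset.card_univ, Fintype.card_fin]
  have split1 := Finset.sum_filter_add_sum_filter_not Q (fun P => P.1 = P.2) f
  have split2 := Finset.sum_filter_add_sum_filter_not (Q.filter (fun P => ¬P.1 = P.2))
    (fun P => (P.1 ∩ P.2).card = d+1) f
  have hdiag : ∑ P ∈ Q.filter (fun P => P.1 = P.2), f P ≤ (n.choose (d+2) : ℝ) * p^(d+2) := by
    have heq : ∀ P ∈ Q.filter (fun P => P.1 = P.2), f P = p^(d+2) := by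
      intro P hP
      rw [Finset.mem_filter] at hP
      obtain ⟨h1, h2⟩ := hmem P hP.1
      rw [hf]
      simp only [← hP.2, Finset.union_self]
      rw [faces_card' h1]
    rw [Finset.sum_congr rfl heq, Finset.sum_const, nsmul_eq_mul]
    apply mul_le_mul_of_nonneg_right _ (pow_nonneg hp0 _)
    have : (Q.filter (fun P => P.1 = P.2)).card ≤ 𝒯.card := by
      apply Finset.card_le_card_of_injOn Prod.fst
      · intro P hP
        rw [Finset.mem_coe, Finset.mem_filter, hQ, Finset.mem_product] at hP
        exact hP.1.1
      · intro P hP P' hP' h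
        rw [Finset.mem_coe, Finset.mem_filter] at hP hP'
        exact Prod.ext h (by rw [← hP.2, ← hP'.2, h])
    exact_mod_cast hcard𝒯 ▸ this
  have hc2 : ∑ P ∈ (Q.filter (fun P => ¬P.1 = P.2)).filter (fun P => (P.1 ∩ P.2).card = d+1), f P
      ≤ ((n.choose (d+2) : ℝ) * ((d+2) * n)) * p^(2*d+3) := by
    have hb : ∀ P ∈ (Q.filter (fun P => ¬P.1 = P.2)).filter (fun P => (P.1 ∩ P.2).card = d+1),
        f P ≤ p^(2*d+3) := by
      intro P hP
      rw [Finset.mem_filter, Finset.mem_filter] at hP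
      obtain ⟨⟨hQ', hne⟩, hic⟩ := hP
      obtain ⟨h1, h2⟩ := hmem P hQ'
      exact pow_le_pow_of_le_one hp0 hp1 (union_faces_med' h1 h2 hic)
    calc ∑ P ∈ _, f P ≤ _ • (p^(2*d+3) : ℝ) := Finset.sum_le_card_nsmul _ _ _ hb
      _ ≤ ((n.choose (d+2) : ℝ) * ((d+2) * n)) * p^(2*d+3) := by
          rw [nsmul_eq_mul]
          apply mul_le_mul_of_nonneg_right _ (pow_nonneg hp0 _)
          rw [Finset.filter_filter]
          exact_mod_cast class2_count'
  have hc3 : ∑ P ∈ (Q.filter (fun P => ¬P.1 = P.2)).filter (fun P => ¬(P.1 ∩ P.2).card = d+1), f P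
      ≤ ((n.choose (d+2) : ℝ))^2 * p^(2*d+4) := by
    have hb : ∀ P ∈ (Q.filter (fun P => ¬P.1 = P.2)).filter (fun P => ¬(P.1 ∩ P.2).card = d+1),
        f P ≤ p^(2*d+4) := by
      intro P hP
      rw [Finset.mem_filter, Finset.mem_filter] at hP
      obtain ⟨⟨hQ', hne⟩, hic⟩ := hP
      obtain ⟨h1, h2⟩ := hmem P hQ'
      have hle := inter_card_le' h1 h2 hne
      show p ^ (P.1.powersetCard (d+1) ∪ P.2.powersetCard (d+1)).card ≤ p^(2*d+4)
      rw [union_faces_small' h1 h2 (by omega)]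
    calc ∑ P ∈ _, f P ≤ _ • (p^(2*d+4) : ℝ) := Finset.sum_le_card_nsmul _ _ _ hb
      _ ≤ ((n.choose (d+2) : ℝ))^2 * p^(2*d+4) := by
          rw [nsmul_eq_mul]
          apply mul_le_mul_of_nonneg_right _ (pow_nonneg hp0 _)
          have := (Finset.card_filter_le (Q.filter (fun P => ¬P.1 = P.2))
            (fun P => ¬(P.1 ∩ P.2).card = d+1)).trans (Finset.card_filter_le Q (fun P => ¬P.1 = P.2))
          rw [hQ, Finset.card_product, hcard𝒯] at this
          calc ((((Q.filter _).filter _).card : ℕ) : ℝ) ≤ ((n.choose (d+2) * n.choose (d+2) : ℕ) : ℝ) := by exact_mod_cast this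
            _ = _ := by push_cast; ring
  have hpow1 : (p:ℝ)^(2*d+4) = p^(d+2) * p^(d+2) := by rw [← pow_add]; congr 1; omega
  have hpow2 : (p:ℝ)^(2*d+3) = p^(d+2) * p^(d+1) := by rw [← pow_add]; congr 1; omega
  calc ∑ P ∈ Q, f P
      = ∑ P ∈ Q.filter (fun P => P.1 = P.2), f P
        + (∑ P ∈ (Q.filter (fun P => ¬P.1 = P.2)).filter (fun P => (P.1 ∩ P.2).card = d+1), f P
          + ∑ P ∈ (Q.filter (fun P => ¬P.1 = P.2)).filter (fun P => ¬(P.1 ∩ P.2).card = d+1), f P) := by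
        rw [split2, split1]
    _ ≤ (n.choose (d+2) : ℝ) * p^(d+2)
        + (((n.choose (d+2) : ℝ) * ((d+2) * n)) * p^(2*d+3) + ((n.choose (d+2) : ℝ))^2 * p^(2*d+4)) :=
        add_le_add hdiag (add_le_add hc2 hc3)
    _ = ((n.choose (d+2):ℝ) * p^(d+2))^2
        + (n.choose (d+2):ℝ) * p^(d+2) * (1 + ((d:ℝ)+2) * n * p^(d+1)) := by
        rw [hpow1, hpow2]; ring

lemma pind_le_one' {n d : ℕ} {p : ℝ} (hp0 : 0 ≤ p) (hp1 : p ≤ 1) :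
    (∑ S ∈ ((Finset.univ : Finset (Fin n)).powerset.filter
        fun s => s.card = d + 1).powerset,
      if 0 < ((Finset.univ : Finset (Fin n)).powerset.filter fun T =>
          T.card = d + 2 ∧ ∀ f ∈ T.powerset, f.card = d + 1 → f ∈ S).card then
        p ^ S.card *
          (1 - p) ^ (((Finset.univ : Finset (Fin n)).powerset.filter
              fun s => s.card = d + 1).card - S.card)
      else 0) ≤ 1 := by
  have key : (∑ S ∈ ((Finset.univ : Finset (Fin n)).powerset.filter
        fun s => s.card = d + 1).powerset,
      if 0 < ((Finset.univ : Finset (Fin n)).powerset.filter fun T =>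
          T.card = d + 2 ∧ ∀ f ∈ T.powerset, f.card = d + 1 → f ∈ S).card then
        p ^ S.card *
          (1 - p) ^ (((Finset.univ : Finset (Fin n)).powerset.filter
              fun s => s.card = d + 1).card - S.card)
      else 0)
      ≤ ∑ S ∈ ((Finset.univ : Finset (Fin n)).powerset.filter
          fun s => s.card = d + 1).powerset,
        p ^ S.card * (1 - p) ^ (((Finset.univ : Finset (Fin n)).powerset.filter
            fun s => s.card = d + 1).card - S.card) := by
    refine Finset.sum_le_sum (fun S hS => ?_)
    split_ifs with h
    · exact le_refl _
    · exact mul_nonneg (pow_nonneg hp0 _) (pow_nonneg (by linarith) _)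
  have h1 := mu_one' p ((Finset.univ : Finset (Fin n)).powerset.filter
    fun s : Finset (Fin n) => s.card = d + 1)
  rw [h1] at key
  exact key

lemma pind_nonneg' {n d : ℕ} {p : ℝ} (hp0 : 0 ≤ p) (hp1 : p ≤ 1) :
    0 ≤ (∑ S ∈ ((Finset.univ : Finset (Fin n)).powerset.filter
        fun s => s.card = d + 1).powerset,
      if 0 < ((Finset.univ : Finset (Fin n)).powerset.filter fun T =>
          T.card = d + 2 ∧ ∀ f ∈ T.powerset, f.card = d + 1 → f ∈ S).card then
        p ^ S.card *
          (1 - p) ^ (((Finset.univ : Finset (Fin n)).powerset.filter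
              fun s => s.card = d + 1).card - S.card)
      else 0) := by
  refine Finset.sum_nonneg (fun S hS => ?_)
  split_ifs with h
  · exact mul_nonneg (pow_nonneg hp0 _) (pow_nonneg (by linarith) _)
  · exact le_refl _


lemma cs_lemma' {α : Type*} (s : Finset α) (μ : α → ℝ) (N : α → ℕ)
    (hμ : ∀ a ∈ s, 0 ≤ μ a) :
    (∑ a ∈ s, μ a * (N a : ℝ))^2
      ≤ (∑ a ∈ s, if 0 < N a then μ a else 0) * (∑ a ∈ s, μ a * (N a : ℝ)^2) := by
  classical
  set G := s.filter (fun a => 0 < N a) with hG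
  have h1 : ∑ a ∈ s, μ a * (N a : ℝ) = ∑ a ∈ G, μ a * (N a : ℝ) := by
    rw [hG]
    symm
    apply Finset.sum_filter_of_ne
    intro a ha hne
    rcases Nat.eq_zero_or_pos (N a) with h0 | h0
    · exact absurd (by rw [h0]; simp) hne
    · exact h0
  have h2 : ∑ a ∈ s, (if 0 < N a then μ a else 0) = ∑ a ∈ G, μ a :=
    (Finset.sum_filter _ _).symm
  have hμG : ∀ a ∈ G, 0 ≤ μ a := fun a ha => hμ a (Finset.mem_of_mem_filter a ha)
  have hCS := Finset.sum_mul_sq_le_sq_mul_sq G (fun a => Real.sqrt (μ a))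
    (fun a => Real.sqrt (μ a) * (N a : ℝ))
  have e1 : ∀ a ∈ G, Real.sqrt (μ a) * (Real.sqrt (μ a) * (N a : ℝ)) = μ a * (N a : ℝ) := by
    intro a ha
    rw [← mul_assoc, Real.mul_self_sqrt (hμG a ha)]
  have e2 : ∀ a ∈ G, Real.sqrt (μ a) ^ 2 = μ a := fun a ha => Real.sq_sqrt (hμG a ha)
  have e3 : ∀ a ∈ G, (Real.sqrt (μ a) * (N a : ℝ)) ^ 2 = μ a * (N a : ℝ)^2 := by
    intro a ha
    rw [mul_pow, Real.sq_sqrt (hμG a ha)]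
  rw [Finset.sum_congr rfl e1, Finset.sum_congr rfl e2, Finset.sum_congr rfl e3] at hCS
  rw [h1, h2]
  refine hCS.trans ?_
  refine mul_le_mul_of_nonneg_left ?_ (Finset.sum_nonneg hμG)
  apply Finset.sum_le_sum_of_subset_of_nonneg (Finset.filter_subset _ _)
  intro a ha _
  exact mul_nonneg (hμ a ha) (sq_nonneg _)

lemma pind_lb' {n d : ℕ} {p : ℝ} (hp0 : 0 ≤ p) (hp1 : p ≤ 1) :
    ((n.choose (d+2):ℝ) * p^(d+2))^2
      ≤ (∑ S ∈ ((Finset.univ : Finset (Fin n)).powerset.filter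
            fun s => s.card = d + 1).powerset,
          if 0 < ((Finset.univ : Finset (Fin n)).powerset.filter fun T =>
              T.card = d + 2 ∧ ∀ f ∈ T.powerset, f.card = d + 1 → f ∈ S).card then
            p ^ S.card *
              (1 - p) ^ (((Finset.univ : Finset (Fin n)).powerset.filter
                  fun s => s.card = d + 1).card - S.card)
          else 0)
        * (((n.choose (d+2):ℝ) * p^(d+2))^2
            + (n.choose (d+2):ℝ) * p^(d+2) * (1 + ((d:ℝ)+2) * n * p^(d+1))) := by
  have h0 := cs_lemma' (((Finset.univ : Finset (Fin n)).powerset.filter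
      fun s => s.card = d + 1).powerset)
    (fun S => p ^ S.card * (1 - p) ^ (((Finset.univ : Finset (Fin n)).powerset.filter
        fun s => s.card = d + 1).card - S.card))
    (fun S => ((Finset.univ : Finset (Fin n)).powerset.filter fun T =>
        T.card = d + 2 ∧ ∀ f ∈ T.powerset, f.card = d + 1 → f ∈ S).card)
    (fun S _ => mul_nonneg (pow_nonneg hp0 _) (pow_nonneg (by linarith) _))
  beta_reduce at h0
  rw [exp_eq'] at h0
  refine h0.trans ?_
  refine mul_le_mul_of_nonneg_left ?_ (pind_nonneg' hp0 hp1)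
  rw [m2_eq']
  exact m2_bound' hp0 hp1

end aux

/-- Second moment method for the random `d`-complex `Y_{n,p,d}`: with
`p(n) = w(n)/n`, `0 ≤ p(n) ≤ 1`, and `w(n) → ∞`, let `X^n` be the number of
`(d+2)`-subsets of `[n]` all of whose `d`-faces belong to the random complex
(identified with its set `S` of `d`-simplices).  Then `E(X^n) → ∞`,
`ξ*/E(X^n) → 0` where `ξ* = (d+2)(n−d−1)p^{d+1}`, and consequently
`Prob(X^n > 0) → 1`. -/
theorem second_moment_method_random_complex (d : ℕ) (hd : 1 ≤ d)
    (w p : ℕ → ℝ) (hpw : ∀ n, p n = w n / n)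
    (hp0 : ∀ n, 0 ≤ p n) (hp1 : ∀ n, p n ≤ 1)
    (hw : Tendsto w atTop atTop) :
    Tendsto (fun n : ℕ =>
        ∑ S ∈ ((Finset.univ : Finset (Fin n)).powerset.filter
            fun s => s.card = d + 1).powerset,
          p n ^ S.card *
            (1 - p n) ^ (((Finset.univ : Finset (Fin n)).powerset.filter
                fun s => s.card = d + 1).card - S.card) *
            (((Finset.univ : Finset (Fin n)).powerset.filter fun T =>
                T.card = d + 2 ∧ ∀ f ∈ T.powerset, f.card = d + 1 → f ∈ S).card : ℝ))
      atTop atTop ∧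
    Tendsto (fun n : ℕ =>
        ((d + 2 : ℝ) * ((n : ℝ) - d - 1) * p n ^ (d + 1)) /
          ∑ S ∈ ((Finset.univ : Finset (Fin n)).powerset.filter
              fun s => s.card = d + 1).powerset,
            p n ^ S.card *
              (1 - p n) ^ (((Finset.univ : Finset (Fin n)).powerset.filter
                  fun s => s.card = d + 1).card - S.card) *
              (((Finset.univ : Finset (Fin n)).powerset.filter fun T =>
                  T.card = d + 2 ∧ ∀ f ∈ T.powerset, f.card = d + 1 → f ∈ S).card : ℝ))
      atTop (nhds 0) ∧
    Tendsto (fun n : ℕ =>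
        ∑ S ∈ ((Finset.univ : Finset (Fin n)).powerset.filter
            fun s => s.card = d + 1).powerset,
          if 0 < ((Finset.univ : Finset (Fin n)).powerset.filter fun T =>
              T.card = d + 2 ∧ ∀ f ∈ T.powerset, f.card = d + 1 → f ∈ S).card then
            p n ^ S.card *
              (1 - p n) ^ (((Finset.univ : Finset (Fin n)).powerset.filter
                  fun s => s.card = d + 1).card - S.card)
          else 0)
      atTop (nhds 1) := by
  have hfact : (0:ℝ) < ((d+2).factorial : ℝ) := by
    exact_mod_cast Nat.factorial_pos (d+2)
  -- basic facts
  have hwp : ∀ n : ℕ, 1 ≤ n → w n = p n * n := by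
    intro n hn
    have hn0 : (n:ℝ) ≠ 0 := Nat.cast_ne_zero.mpr (by omega)
    rw [hpw n]
    field_simp
  have hchoose : ∀ n : ℕ, 2*(d+2) ≤ n →
      ((n:ℝ)/2)^(d+2) / ((d+2).factorial : ℝ) ≤ (n.choose (d+2) : ℝ) := by
    intro n hn
    refine le_trans ?_ (Nat.pow_le_choose (d+2) n)
    have hcast : ((n + 1 - (d+2) : ℕ) : ℝ) = (n:ℝ) + 1 - ((d:ℝ)+2) := by
      have h2 : d + 2 ≤ n + 1 := by omega
      rw [Nat.cast_sub h2]
      push_cast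
      ring
    have hnn : (2*(d+2) : ℝ) ≤ (n:ℝ) := by exact_mod_cast hn
    gcongr
    rw [hcast]
    linarith
  -- lower bound on E
  have hElb : ∀ n : ℕ, 2*(d+2) ≤ n →
      (w n / 2)^(d+2) / ((d+2).factorial : ℝ) ≤ (n.choose (d+2) : ℝ) * p n ^ (d+2) := by
    intro n hn
    have hnR : (0:ℝ) < n := by
      have : (0:ℕ) < n := by omega
      exact_mod_cast this
    have hkey : ((n:ℝ)/2)^(d+2) * (p n)^(d+2) = (w n / 2)^(d+2) := by
      rw [← mul_pow]
      congr 1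
      rw [hpw n]
      field_simp
    calc (w n / 2)^(d+2) / ((d+2).factorial : ℝ)
        = ((n:ℝ)/2)^(d+2) / ((d+2).factorial : ℝ) * (p n)^(d+2) := by
          rw [div_mul_eq_mul_div, hkey]
      _ ≤ (n.choose (d+2) : ℝ) * (p n)^(d+2) :=
          mul_le_mul_of_nonneg_right (hchoose n hn) (pow_nonneg (hp0 n) _)
  -- Part 1
  have hEinf : Tendsto (fun n : ℕ => (n.choose (d+2) : ℝ) * p n ^ (d+2)) atTop atTop := by
    have hwinf2 : Tendsto (fun n : ℕ => (w n / 2)^(d+2) / ((d+2).factorial : ℝ)) atTop atTop := by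
      apply Tendsto.atTop_div_const hfact
      exact (tendsto_pow_atTop (n := d+2) (by omega)).comp (hw.atTop_div_const two_pos)
    apply tendsto_atTop_mono' atTop ?_ hwinf2
    filter_upwards [eventually_ge_atTop (2*(d+2))] with n hn
    exact hElb n hn
  have hElarge := hEinf.eventually_ge_atTop 1
  have hwlarge := hw.eventually_ge_atTop 1
  -- key inequality: ξ' * w ≤ C * E
  have hkey2 : ∀ n : ℕ, 2*(d+2) ≤ n →
      (((d:ℝ)+2) * n * p n ^ (d+1)) * w n
        ≤ (((d:ℝ)+2) * ((d+2).factorial : ℝ) * 2^(d+2)) * ((n.choose (d+2) : ℝ) * p n ^ (d+2)) := by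
    intro n hn
    have hn1R : (1:ℝ) ≤ (n:ℝ) := by
      have : (1:ℕ) ≤ n := by omega
      exact_mod_cast this
    have h1 : ((n:ℝ))^(d+2) ≤ ((d+2).factorial : ℝ) * 2^(d+2) * (n.choose (d+2):ℝ) := by
      have h := hchoose n hn
      rw [div_le_iff₀ hfact] at h
      have h2 : ((n:ℝ))^(d+2) = 2^(d+2) * ((n:ℝ)/2)^(d+2) := by
        rw [← mul_pow]
        congr 1
        ring
      rw [h2]
      calc (2:ℝ)^(d+2) * ((n:ℝ)/2)^(d+2)
          ≤ 2^(d+2) * ((n.choose (d+2):ℝ) * ((d+2).factorial : ℝ)) :=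
            mul_le_mul_of_nonneg_left h (by positivity)
        _ = ((d+2).factorial : ℝ) * 2^(d+2) * (n.choose (d+2):ℝ) := by ring
    have h2 : ((n:ℝ))^2 ≤ ((n:ℝ))^(d+2) := pow_le_pow_right₀ hn1R (by omega)
    have hwn : w n = p n * n := hwp n (by omega)
    calc (((d:ℝ)+2) * n * p n ^ (d+1)) * w n
        = ((n:ℝ)^2) * (((d:ℝ)+2) * p n ^ (d+2)) := by
          rw [hwn, pow_succ]
          ring
      _ ≤ ((n:ℝ)^(d+2)) * (((d:ℝ)+2) * p n ^ (d+2)) :=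
          mul_le_mul_of_nonneg_right h2
            (mul_nonneg (by positivity) (pow_nonneg (hp0 n) _))
      _ ≤ (((d+2).factorial : ℝ) * 2^(d+2) * (n.choose (d+2):ℝ)) * (((d:ℝ)+2) * p n ^ (d+2)) :=
          mul_le_mul_of_nonneg_right h1
            (mul_nonneg (by positivity) (pow_nonneg (hp0 n) _))
      _ = (((d:ℝ)+2) * ((d+2).factorial : ℝ) * 2^(d+2)) * ((n.choose (d+2) : ℝ) * p n ^ (d+2)) := by
          ring
  -- ratio bound
  have hratio : ∀ᶠ n : ℕ in atTop,
      (((d:ℝ)+2) * n * p n ^ (d+1)) / ((n.choose (d+2) : ℝ) * p n ^ (d+2))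
        ≤ (((d:ℝ)+2) * ((d+2).factorial : ℝ) * 2^(d+2)) / w n := by
    filter_upwards [eventually_ge_atTop (2*(d+2)), hElarge, hwlarge] with n hn hE1 hw1
    rw [div_le_div_iff₀ (by linarith) (by linarith)]
    exact hkey2 n hn
  have hCw : Tendsto (fun n : ℕ => (((d:ℝ)+2) * ((d+2).factorial : ℝ) * 2^(d+2)) / w n)
      atTop (nhds 0) := tendsto_const_nhds.div_atTop hw
  have hxinn : ∀ n : ℕ, 0 ≤ ((d:ℝ)+2) * n * p n ^ (d+1) := fun n =>
    mul_nonneg (mul_nonneg (by positivity) (Nat.cast_nonneg n)) (pow_nonneg (hp0 n) _)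
  have hxiE0 : Tendsto (fun n : ℕ =>
      (((d:ℝ)+2) * n * p n ^ (d+1)) / ((n.choose (d+2) : ℝ) * p n ^ (d+2)))
      atTop (nhds 0) := by
    apply tendsto_of_tendsto_of_tendsto_of_le_of_le' tendsto_const_nhds hCw
    · filter_upwards [hElarge] with n hE1
      exact div_nonneg (hxinn n) (by linarith)
    · exact hratio
  refine ⟨?_, ?_, ?_⟩
  · exact hEinf.congr (fun n => (exp_eq' (p n)).symm)
  · -- Part 2
    have htwo : Tendsto (fun n : ℕ =>
        ((d + 2 : ℝ) * ((n : ℝ) - d - 1) * p n ^ (d + 1)) /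
          ((n.choose (d+2) : ℝ) * p n ^ (d + 2))) atTop (nhds 0) := by
      apply tendsto_of_tendsto_of_tendsto_of_le_of_le' tendsto_const_nhds hCw
      · filter_upwards [hElarge, eventually_ge_atTop (d+1)] with n hE1 hn
        have hnd : ((d:ℝ)+1) ≤ (n:ℝ) := by exact_mod_cast hn
        apply div_nonneg _ (by linarith)
        apply mul_nonneg (mul_nonneg (by positivity) (by linarith)) (pow_nonneg (hp0 n) _)
      · filter_upwards [hratio, hElarge] with n hr hE1
        refine le_trans ?_ hr
        have hd0 : (0:ℝ) ≤ (d:ℝ) := Nat.cast_nonneg d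
        have hnum : (d + 2 : ℝ) * ((n : ℝ) - d - 1) * p n ^ (d + 1)
            ≤ ((d:ℝ)+2) * n * p n ^ (d+1) := by
          refine mul_le_mul_of_nonneg_right ?_ (pow_nonneg (hp0 n) _)
          refine mul_le_mul_of_nonneg_left (by linarith) (by positivity)
        exact (div_le_div_iff_of_pos_right (by linarith)).mpr hnum
    exact htwo.congr (fun n => by rw [exp_eq'])
  · -- Part 3
    have hr : Tendsto (fun n : ℕ =>
        (1 + ((d:ℝ)+2) * n * p n ^ (d+1)) / ((n.choose (d+2):ℝ) * p n ^ (d+2)))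
        atTop (nhds 0) := by
      have h1 : Tendsto (fun n : ℕ => 1 / ((n.choose (d+2):ℝ) * p n ^ (d+2)))
          atTop (nhds 0) := by
        apply hEinf.inv_tendsto_atTop.congr
        intro n
        rw [Pi.inv_apply, one_div]
      have h2 := h1.add hxiE0
      rw [add_zero] at h2
      apply h2.congr
      intro n
      rw [← add_div]
    have hinv : Tendsto (fun n : ℕ =>
        (1 + (1 + ((d:ℝ)+2) * n * p n ^ (d+1)) / ((n.choose (d+2):ℝ) * p n ^ (d+2)))⁻¹)
        atTop (nhds 1) := by
      have h3 := (tendsto_const_nhds (x := (1:ℝ)) (f := atTop (α := ℕ))).add hr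
      rw [add_zero] at h3
      have h4 := h3.inv₀ (by norm_num)
      rw [inv_one] at h4
      exact h4
    have hlow : Tendsto (fun n : ℕ =>
        ((n.choose (d+2):ℝ) * p n ^ (d+2))^2 /
          (((n.choose (d+2):ℝ) * p n ^ (d+2))^2
            + ((n.choose (d+2):ℝ) * p n ^ (d+2)) * (1 + ((d:ℝ)+2) * n * p n ^ (d+1))))
        atTop (nhds 1) := by
      apply hinv.congr'
      filter_upwards [hElarge] with n hE1
      have hEpos : (0:ℝ) < (n.choose (d+2):ℝ) * p n ^ (d+2) := by linarith
      have hXn := hxinn n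
      have hEne : ((n.choose (d+2):ℝ) * p n ^ (d+2)) ≠ 0 := ne_of_gt hEpos
      generalize ((n.choose (d+2):ℝ) * p n ^ (d+2)) = E at hEne hEpos ⊢
      field_simp
    apply tendsto_of_tendsto_of_tendsto_of_le_of_le' hlow tendsto_const_nhds
    · filter_upwards [hElarge] with n hE1
      have hEpos : (0:ℝ) < (n.choose (d+2):ℝ) * p n ^ (d+2) := by linarith
      have hXn := hxinn n
      have hD : (0:ℝ) < ((n.choose (d+2):ℝ) * p n ^ (d+2))^2
          + ((n.choose (d+2):ℝ) * p n ^ (d+2)) * (1 + ((d:ℝ)+2) * n * p n ^ (d+1)) := by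
        have : (0:ℝ) < ((n.choose (d+2):ℝ) * p n ^ (d+2))^2 := by positivity
        nlinarith
      rw [div_le_iff₀ hD]
      exact pind_lb' (hp0 n) (hp1 n)
    · exact Filter.Eventually.of_forall (fun n => pind_le_one' (hp0 n) (hp1 n))
end

section
/- Let d ≥ 1 and p(n) = w(n)/n with lim w(n) = ∞. Then the probability that the top homology H_d(Δ; Z/2) of Δ ∈ Y_{n,p(n),d} is nonzero tends to 1 as n → ∞. -/
open scoped Classical

open Filter

/-- The `ℤ/2` simplicial boundary of a chain (identified with its support) of
simplices (finite vertex sets): a face lies in the boundary iff it is a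
codimension-one face of an odd number of simplices of the chain. -/
def bdryZ2 {n : ℕ} (c : Finset (Finset (Fin n))) : Finset (Finset (Fin n)) :=
  (c.biUnion fun t => t.powerset).filter fun s =>
    Odd ((c.filter fun t => s ⊆ t ∧ s.card + 1 = t.card).card)

lemma zmod2_cases (x : ZMod 2) : x = 0 ∨ x = 1 := by
  have h : ∀ y : ZMod 2, y = 0 ∨ y = 1 := by decide
  exact h x

/-- If a family of `(d+1)`-element subsets of `Fin n` has more members than
`n.choose d`, then some nonempty subfamily has empty `ℤ/2` boundary.
(Linear algebra: the boundary matrix has more columns than rows.) -/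
lemma exists_cycle {n d : ℕ} (S : Finset (Finset (Fin n)))
    (hS : ∀ t ∈ S, t.card = d + 1)
    (hcard : n.choose d < S.card) :
    ∃ c ∈ S.powerset, c.Nonempty ∧ bdryZ2 c = ∅ := by
  set D : Finset (Finset (Fin n)) := Finset.univ.powersetCard d with hD
  let M : Matrix ↥D ↥S (ZMod 2) := fun s t => if (s : Finset (Fin n)) ⊆ (t : Finset (Fin n)) then 1 else 0
  have hnotinj : ¬ Function.Injective M.mulVecLin := by
    intro h
    have h2 := LinearMap.finrank_le_finrank_of_injective h
    rw [Module.finrank_pi, Module.finrank_pi, Fintype.card_coe, Fintype.card_coe,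
      hD, Finset.card_powersetCard, Finset.card_univ, Fintype.card_fin] at h2
    omega
  rw [Function.not_injective_iff] at hnotinj
  obtain ⟨a, b, hab, hne⟩ := hnotinj
  set f : ↥S → ZMod 2 := a - b with hf
  have hker : M.mulVecLin f = 0 := by rw [map_sub, hab, sub_self]
  have hfne : f ≠ 0 := sub_ne_zero_of_ne hne
  set c : Finset (Finset (Fin n)) := S.filter (fun t => ∃ h : t ∈ S, f ⟨t, h⟩ ≠ 0) with hc
  have hcS : c ⊆ S := Finset.filter_subset _ _
  refine ⟨c, Finset.mem_powerset.2 hcS, ?_, ?_⟩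
  · obtain ⟨t, ht⟩ := Function.ne_iff.1 hfne
    exact ⟨t, Finset.mem_filter.2 ⟨t.2, t.2, by simpa using ht⟩⟩
  · rw [bdryZ2, Finset.filter_eq_empty_iff]
    intro s _
    rw [Nat.not_odd_iff_even]
    have hcc : ∀ t ∈ c, t.card = d + 1 := fun t ht => hS t (hcS ht)
    by_cases hsd : s.card = d
    · have hfilter : c.filter (fun t => s ⊆ t ∧ s.card + 1 = t.card)
          = c.filter (fun t => s ⊆ t) :=
        Finset.filter_congr (fun t ht => by simp [hcc t ht, hsd])
      have hsD : s ∈ D := Finset.mem_powersetCard.2 ⟨Finset.subset_univ s, hsd⟩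
      have h0 : M.mulVecLin f ⟨s, hsD⟩ = 0 := by rw [hker]; rfl
      have h1 : M.mulVecLin f ⟨s, hsD⟩
          = ∑ t : ↥S, if s ⊆ (t : Finset (Fin n)) ∧ f t ≠ 0 then 1 else 0 := by
        rw [Matrix.mulVecLin_apply]
        simp only [Matrix.mulVec, dotProduct, M]
        refine Finset.sum_congr rfl (fun t _ => ?_)
        rcases zmod2_cases (f t) with h | h <;> by_cases hst : s ⊆ (t : Finset (Fin n)) <;>
          simp [h, hst]
      rw [h1, Finset.sum_boole] at h0
      have hcards : (Finset.univ.filter (fun t : ↥S => s ⊆ (t : Finset (Fin n)) ∧ f t ≠ 0)).card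
          = (c.filter (fun t => s ⊆ t)).card := by
        refine Finset.card_bij (fun t _ => (t : Finset (Fin n))) ?_ ?_ ?_
        · intro t ht
          rw [Finset.mem_filter] at ht ⊢
          exact ⟨Finset.mem_filter.2 ⟨t.2, t.2, by simpa using ht.2.2⟩, ht.2.1⟩
        · intro t₁ _ t₂ _ h; exact Subtype.ext h
        · intro t ht
          rw [Finset.mem_filter] at ht
          obtain ⟨htc, hst⟩ := ht
          rw [hc, Finset.mem_filter] at htc
          obtain ⟨htS, h', hf'⟩ := htc
          exact ⟨⟨t, htS⟩, Finset.mem_filter.2 ⟨Finset.mem_univ _, hst, hf'⟩, rfl⟩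
      rw [hcards] at h0
      rw [hfilter, even_iff_two_dvd]
      exact (ZMod.natCast_eq_zero_iff _ 2).1 h0
    · have : c.filter (fun t => s ⊆ t ∧ s.card + 1 = t.card) = ∅ := by
        rw [Finset.filter_eq_empty_iff]
        intro t ht h'
        exact hsd (by have := hcc t ht; omega)
      simp [this]

lemma sum_powerset_pow_s16 {α : Type*} [DecidableEq α] (T : Finset α) (a b : ℝ) :
    ∑ S ∈ T.powerset, a ^ S.card * b ^ (T.card - S.card) = (a + b) ^ T.card := by
  calc ∑ S ∈ T.powerset, a ^ S.card * b ^ (T.card - S.card)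
      = ∑ S ∈ T.powerset, (∏ _i ∈ S, a) * ∏ _i ∈ T \ S, b := by
        refine Finset.sum_congr rfl (fun S hS => ?_)
        rw [Finset.prod_const, Finset.prod_const,
          Finset.card_sdiff_of_subset (Finset.mem_powerset.1 hS)]
    _ = ∏ _i ∈ T, (a + b) := (Finset.prod_add _ _ _).symm
    _ = (a + b) ^ T.card := Finset.prod_const _

lemma sum_small_le {α : Type*} [DecidableEq α] (T : Finset α) (p : ℝ) (m : ℕ)
    (hp0 : 0 ≤ p) (hp1 : p ≤ 1) :
    ∑ S ∈ T.powerset, (if S.card ≤ m then p ^ S.card * (1 - p) ^ (T.card - S.card) else 0)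
      ≤ 2 ^ m * (1 - p / 2) ^ T.card := by
  have key : ∀ S ∈ T.powerset,
      (if S.card ≤ m then p ^ S.card * (1 - p) ^ (T.card - S.card) else 0)
        ≤ 2 ^ m * ((p / 2) ^ S.card * (1 - p) ^ (T.card - S.card)) := by
    intro S _
    have hq : (0:ℝ) ≤ 1 - p := by linarith
    have h2 : (0:ℝ) ≤ (p / 2) ^ S.card * (1 - p) ^ (T.card - S.card) :=
      mul_nonneg (pow_nonneg (by linarith) _) (pow_nonneg hq _)
    split_ifs with h
    · have : p ^ S.card = 2 ^ S.card * (p / 2) ^ S.card := by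
        rw [← mul_pow]; ring_nf
      rw [this, mul_assoc]
      refine mul_le_mul_of_nonneg_right ?_ h2
      exact pow_le_pow_right₀ (by norm_num) h
    · positivity
  calc ∑ S ∈ T.powerset, (if S.card ≤ m then p ^ S.card * (1 - p) ^ (T.card - S.card) else 0)
      ≤ ∑ S ∈ T.powerset, 2 ^ m * ((p / 2) ^ S.card * (1 - p) ^ (T.card - S.card)) :=
        Finset.sum_le_sum key
    _ = 2 ^ m * ∑ S ∈ T.powerset, (p / 2) ^ S.card * (1 - p) ^ (T.card - S.card) := by
        rw [Finset.mul_sum]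
    _ = 2 ^ m * (p / 2 + (1 - p)) ^ T.card := by rw [sum_powerset_pow_s16]
    _ = 2 ^ m * (1 - p / 2) ^ T.card := by ring_nf

lemma pow_bound_exp (p : ℝ) (m N : ℕ) (hp1 : p ≤ 1) :
    (2:ℝ) ^ m * (1 - p / 2) ^ N ≤ Real.exp (m * Real.log 2 - p * N / 2) := by
  have h2 : (2:ℝ) ^ m = Real.exp (m * Real.log 2) := by
    rw [Real.exp_nat_mul, Real.exp_log two_pos]
  have hbase : (0:ℝ) ≤ 1 - p / 2 := by linarith
  have hle : (1 - p / 2 : ℝ) ≤ Real.exp (-(p / 2)) := by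
    have := Real.add_one_le_exp (-(p / 2)); linarith
  have h3 : (1 - p / 2 : ℝ) ^ N ≤ Real.exp (-(p / 2)) ^ N :=
    pow_le_pow_left₀ hbase hle N
  calc (2:ℝ) ^ m * (1 - p / 2) ^ N
      ≤ Real.exp (m * Real.log 2) * Real.exp (-(p / 2)) ^ N := by
        rw [h2]; exact mul_le_mul_of_nonneg_left h3 (Real.exp_nonneg _)
    _ = Real.exp (m * Real.log 2 - p * N / 2) := by
        rw [← Real.exp_nat_mul, ← Real.exp_add]; ring_nf

lemma g_tendsto_atBot (d : ℕ) (w p : ℕ → ℝ) (hpw : ∀ n, p n = w n / n)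
    (hp0 : ∀ n, 0 ≤ p n) (hw : Tendsto w atTop atTop) :
    Tendsto (fun n : ℕ => (n.choose d : ℝ) * Real.log 2 - p n * (n.choose (d+1)) / 2)
      atTop atBot := by
  rw [tendsto_atBot]
  intro b
  have hlog : (0:ℝ) < Real.log 2 := Real.log_pos (by norm_num)
  set A : ℝ := (d:ℝ) + 1 with hA
  have hA0 : (0:ℝ) < A := by positivity
  filter_upwards [hw.eventually_ge_atTop (4 * A * (Real.log 2 + |b|)),
    eventually_ge_atTop (2*d+1)] with n hwn hn
  have hdn : d ≤ n := by omega
  have hn0 : (0:ℝ) < n := by exact_mod_cast Nat.pos_of_ne_zero (by omega)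
  have hM1 : (1:ℝ) ≤ (n.choose d : ℝ) := by
    exact_mod_cast Nat.one_le_iff_ne_zero.2 (Nat.choose_pos hdn).ne'
  have h0M : (0:ℝ) ≤ (n.choose d : ℝ) := by linarith
  have hchoose : (n.choose (d+1) : ℝ) * A = (n.choose d : ℝ) * ((n:ℝ) - d) := by
    have h := congrArg (Nat.cast (R := ℝ)) (Nat.choose_succ_right_eq n d)
    push_cast [Nat.cast_sub hdn] at h
    rw [hA]; linarith [h]
  have hnd : (n:ℝ)/2 ≤ (n:ℝ) - d := by
    have h : ((2*d+1 : ℕ) : ℝ) ≤ n := by exact_mod_cast hn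
    push_cast at h; linarith
  have hw0 : (0:ℝ) ≤ w n := le_trans (by positivity) hwn
  have hNge : (n.choose d : ℝ) * (n:ℝ) / (2*A) ≤ (n.choose (d+1) : ℝ) := by
    rw [div_le_iff₀ (by positivity)]
    nlinarith [mul_nonneg h0M (by linarith : (0:ℝ) ≤ 2*((n:ℝ) - d) - n)]
  have h1 : p n * ((n.choose d : ℝ) * (n:ℝ) / (2*A)) ≤ p n * (n.choose (d+1) : ℝ) :=
    mul_le_mul_of_nonneg_left hNge (hp0 n)
  have h2 : p n * ((n.choose d : ℝ) * (n:ℝ) / (2*A)) = (n.choose d : ℝ) * w n / (2*A) := by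
    rw [hpw]; field_simp
  have h1' : (n.choose d : ℝ) * w n ≤ p n * (n.choose (d+1) : ℝ) * (2*A) := by
    rw [h2, div_le_iff₀ (by positivity)] at h1
    exact h1
  have h10 : (n.choose d : ℝ) * (4 * A * (Real.log 2 + |b|)) ≤ (n.choose d : ℝ) * w n :=
    mul_le_mul_of_nonneg_left hwn h0M
  have h11 : 1 * (4*A*|b|) ≤ (n.choose d : ℝ) * (4*A*|b|) :=
    mul_le_mul_of_nonneg_right hM1 (by positivity)
  have h12 : (4*A) * (-|b|) ≤ (4*A) * b :=
    mul_le_mul_of_nonneg_left (neg_abs_le b) (by positivity)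
  have hgoal : (4*A) * ((n.choose d : ℝ) * Real.log 2 - p n * (n.choose (d+1) : ℝ) / 2)
      ≤ (4*A) * b := by nlinarith [h10, h11, h12, h1']
  exact le_of_mul_le_mul_left hgoal (by positivity)

/-- For `d ≥ 1` and `p(n) = w(n)/n` with `0 ≤ p(n) ≤ 1` and `w(n) → ∞`, the
probability that the top homology `H_d(Δ; ℤ/2)` of a random complex
`Δ ∈ Y_{n,p(n),d}` is nonzero (equivalently, since `dim Δ ≤ d`, that `Δ` carries
a nonzero `ℤ/2` `d`-cycle, `Δ` being identified with its set `S` of `d`-simplices)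
tends to `1` as `n → ∞`. -/
theorem top_homology_nonzero_above_threshold (d : ℕ) (hd : 1 ≤ d)
    (w p : ℕ → ℝ) (hpw : ∀ n, p n = w n / n)
    (hp0 : ∀ n, 0 ≤ p n) (hp1 : ∀ n, p n ≤ 1)
    (hw : Tendsto w atTop atTop) :
    Tendsto (fun n : ℕ =>
        ∑ S ∈ ((Finset.univ : Finset (Fin n)).powerset.filter
            fun s => s.card = d + 1).powerset,
          if ∃ c ∈ S.powerset, c.Nonempty ∧ bdryZ2 c = ∅ then
            p n ^ S.card *
              (1 - p n) ^ (((Finset.univ : Finset (Fin n)).powerset.filter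
                  fun s => s.card = d + 1).card - S.card)
          else 0)
      atTop (nhds 1) := by
  have hTcard : ∀ n : ℕ, (((Finset.univ : Finset (Fin n)).powerset.filter
      fun s => s.card = d + 1)).card = n.choose (d+1) := by
    intro n
    rw [← Finset.powersetCard_eq_filter, Finset.card_powersetCard, Finset.card_univ,
      Fintype.card_fin]
  set q : ℕ → ℝ := fun n =>
    ∑ S ∈ ((Finset.univ : Finset (Fin n)).powerset.filter
        fun s => s.card = d + 1).powerset,
      if ¬ (∃ c ∈ S.powerset, c.Nonempty ∧ bdryZ2 c = ∅) then
        p n ^ S.card *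
          (1 - p n) ^ (((Finset.univ : Finset (Fin n)).powerset.filter
              fun s => s.card = d + 1).card - S.card)
      else 0 with hqdef
  have heq : ∀ n : ℕ,
      (∑ S ∈ ((Finset.univ : Finset (Fin n)).powerset.filter
          fun s => s.card = d + 1).powerset,
        if ∃ c ∈ S.powerset, c.Nonempty ∧ bdryZ2 c = ∅ then
          p n ^ S.card *
            (1 - p n) ^ (((Finset.univ : Finset (Fin n)).powerset.filter
                fun s => s.card = d + 1).card - S.card)
        else 0) = 1 - q n := by
    intro n
    set T : Finset (Finset (Fin n)) := (Finset.univ : Finset (Fin n)).powerset.filter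
        fun s => s.card = d + 1 with hT
    have hsplit : ∀ S ∈ T.powerset,
        (if ∃ c ∈ S.powerset, c.Nonempty ∧ bdryZ2 c = ∅ then
            p n ^ S.card * (1 - p n) ^ (T.card - S.card) else 0)
          = p n ^ S.card * (1 - p n) ^ (T.card - S.card)
            - (if ¬ (∃ c ∈ S.powerset, c.Nonempty ∧ bdryZ2 c = ∅) then
                p n ^ S.card * (1 - p n) ^ (T.card - S.card) else 0) := by
      intro S _
      by_cases h : ∃ c ∈ S.powerset, c.Nonempty ∧ bdryZ2 c = ∅
      · rw [if_pos h, if_neg (not_not_intro h), sub_zero]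
      · rw [if_neg h, if_pos h, sub_self]
    rw [Finset.sum_congr rfl hsplit, Finset.sum_sub_distrib]
    have hbinom : ∑ S ∈ T.powerset, p n ^ S.card * (1 - p n) ^ (T.card - S.card) = 1 := by
      rw [sum_powerset_pow_s16]
      norm_num
    rw [hbinom]
  have hq0 : Tendsto q atTop (nhds 0) := by
    apply squeeze_zero (g := fun n =>
      Real.exp ((n.choose d : ℝ) * Real.log 2 - p n * (n.choose (d+1)) / 2))
    · intro n
      apply Finset.sum_nonneg
      intro S _
      have h1 : (0:ℝ) ≤ 1 - p n := by linarith [hp1 n]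
      split_ifs
      all_goals try exact le_rfl
      all_goals exact mul_nonneg (pow_nonneg (hp0 n) _) (pow_nonneg h1 _)
    · intro n
      set T : Finset (Finset (Fin n)) := (Finset.univ : Finset (Fin n)).powerset.filter
          fun s => s.card = d + 1 with hT
      have step1 : q n ≤ ∑ S ∈ T.powerset,
          (if S.card ≤ n.choose d then p n ^ S.card * (1 - p n) ^ (T.card - S.card) else 0) := by
        apply Finset.sum_le_sum
        intro S hS
        have h1 : (0:ℝ) ≤ 1 - p n := by linarith [hp1 n]
        have hF : (0:ℝ) ≤ p n ^ S.card * (1 - p n) ^ (T.card - S.card) :=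
          mul_nonneg (pow_nonneg (hp0 n) _) (pow_nonneg h1 _)
        by_cases h : ∃ c ∈ S.powerset, c.Nonempty ∧ bdryZ2 c = ∅
        · simp only [h, not_true_eq_false, if_false]
          split_ifs
          all_goals try exact le_rfl
          all_goals exact hF
        · have hS' : ∀ t ∈ S, t.card = d + 1 := by
            intro t ht
            have := Finset.mem_powerset.1 hS ht
            exact (Finset.mem_filter.1 this).2
          have hcard : S.card ≤ n.choose d := by
            by_contra hc
            exact h (exists_cycle S hS' (lt_of_not_ge hc))
          rw [if_pos h, if_pos hcard]
      have step2 := sum_small_le T (p n) (n.choose d) (hp0 n) (hp1 n)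
      have step3 : (2:ℝ) ^ (n.choose d) * (1 - p n / 2) ^ T.card
          ≤ Real.exp ((n.choose d : ℝ) * Real.log 2 - p n * (n.choose (d+1)) / 2) := by
        rw [hT, hTcard n]
        exact pow_bound_exp (p n) (n.choose d) (n.choose (d+1)) (hp1 n)
      calc q n ≤ _ := step1
        _ ≤ _ := step2
        _ ≤ _ := step3
    · exact Real.tendsto_exp_atBot.comp (g_tendsto_atBot d w p hpw hp0 hw)
  have := (tendsto_const_nhds (x := (1:ℝ)) (f := atTop)).sub hq0
  rw [sub_zero] at this
  exact this.congr (fun n => (heq n).symm)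
end
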